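/- Consistency of directional minimization over a grid direction subset. Let D be a direction set in ℝⁿ and let D^W ⊆ D be a finite subset whose directional resolution dθ = sup_{w ∈ D} min_{v ∈ D^W} angle(w, v) satisfies dθ < π/2. Then for every symmetric n×n matrix M: λ_D(M) ≤ min_{v ∈ D^W} (vᵀ M v)/|v|² ≤ λ_D(M) + 4 · dθ · ‖M‖, where ‖M‖ is the operator norm. -/

import Mathlib

open Matrix

/-- The `D`-convexity operator `λ_D(M) = inf_{v ∈ D} (vᵀ M v)/|v|²`,
valued in the extended reals. -/
noncomputable def lamD {n : ℕ} (D : Set (Fin n → ℝ))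
    (M : Matrix (Fin n) (Fin n) ℝ) : EReal :=
  ⨅ v ∈ D, (((v ⬝ᵥ M.mulVec v) / (v ⬝ᵥ v) : ℝ) : EReal)

/-- The Euclidean (ℓ²) operator norm of a matrix. -/
noncomputable def matOpNorm {n : ℕ} (M : Matrix (Fin n) (Fin n) ℝ) : ℝ :=
  ‖LinearMap.toContinuousLinearMap (Matrix.toEuclideanLin M)‖

/-- The angle between two nonzero vectors. -/
noncomputable def vecAngle {n : ℕ} (w v : Fin n → ℝ) : ℝ :=
  Real.arccos ((w ⬝ᵥ v) / (Real.sqrt (w ⬝ᵥ w) * Real.sqrt (v ⬝ᵥ v)))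

section Aux

variable {n : ℕ}

lemma dot_eq_inner' (x y : Fin n → ℝ) :
    x ⬝ᵥ y = @inner ℝ (EuclideanSpace ℝ (Fin n)) _
      ((WithLp.equiv 2 _).symm x) ((WithLp.equiv 2 _).symm y) := by
  simp [dotProduct, PiLp.inner_apply, RCLike.inner_apply, mul_comm]

lemma sqrt_dot_eq_norm' (x : Fin n → ℝ) :
    Real.sqrt (x ⬝ᵥ x) = ‖((WithLp.equiv 2 (Fin n → ℝ)).symm x : EuclideanSpace ℝ (Fin n))‖ := by
  rw [EuclideanSpace.norm_eq]
  simp [dotProduct, sq]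

lemma abs_dot_le' (x y : Fin n → ℝ) :
    |x ⬝ᵥ y| ≤ Real.sqrt (x ⬝ᵥ x) * Real.sqrt (y ⬝ᵥ y) := by
  rw [dot_eq_inner', sqrt_dot_eq_norm', sqrt_dot_eq_norm']
  exact abs_real_inner_le_norm _ _

lemma abs_dot_mulVec_le' (M : Matrix (Fin n) (Fin n) ℝ) (x y : Fin n → ℝ) :
    |x ⬝ᵥ M.mulVec y| ≤ matOpNorm M * (Real.sqrt (x ⬝ᵥ x) * Real.sqrt (y ⬝ᵥ y)) := by
  have h1 : x ⬝ᵥ M.mulVec y = @inner ℝ (EuclideanSpace ℝ (Fin n)) _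
      ((WithLp.equiv 2 _).symm x) (Matrix.toEuclideanLin M ((WithLp.equiv 2 _).symm y)) := by
    exact dot_eq_inner' x (M.mulVec y)
  rw [h1, sqrt_dot_eq_norm', sqrt_dot_eq_norm']
  calc _ ≤ ‖((WithLp.equiv 2 (Fin n → ℝ)).symm x : EuclideanSpace ℝ (Fin n))‖ *
        ‖Matrix.toEuclideanLin M ((WithLp.equiv 2 (Fin n → ℝ)).symm y)‖ :=
        abs_real_inner_le_norm _ _
    _ ≤ _ := by
        have h2 : ‖Matrix.toEuclideanLin M ((WithLp.equiv 2 (Fin n → ℝ)).symm y)‖ ≤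
            matOpNorm M * ‖((WithLp.equiv 2 (Fin n → ℝ)).symm y : EuclideanSpace ℝ (Fin n))‖ :=
          (LinearMap.toContinuousLinearMap (Matrix.toEuclideanLin M)).le_opNorm
            ((WithLp.equiv 2 (Fin n → ℝ)).symm y)
        nlinarith [norm_nonneg ((WithLp.equiv 2 (Fin n → ℝ)).symm x : EuclideanSpace ℝ (Fin n)),
          norm_nonneg (Matrix.toEuclideanLin M ((WithLp.equiv 2 (Fin n → ℝ)).symm y))]

lemma dot_self_pos' {x : Fin n → ℝ} (hx : x ≠ 0) : 0 < x ⬝ᵥ x := by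
  rcases Function.ne_iff.mp hx with ⟨i, hi⟩
  have h1 : ∀ j, 0 ≤ x j * x j := fun j => mul_self_nonneg _
  have : 0 < x i * x i := mul_self_pos.mpr hi
  exact Finset.sum_pos' (fun j _ => h1 j) ⟨i, Finset.mem_univ i, this⟩

lemma rayleigh_diff' (M : Matrix (Fin n) (Fin n) ℝ) {w v : Fin n → ℝ}
    (hw : w ≠ 0) (hv : v ≠ 0) :
    (v ⬝ᵥ M.mulVec v) / (v ⬝ᵥ v) ≤
      (w ⬝ᵥ M.mulVec w) / (w ⬝ᵥ w) + 2 * vecAngle w v * matOpNorm M := by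
  have hwp := dot_self_pos' hw
  have hvp := dot_self_pos' hv
  set nw := Real.sqrt (w ⬝ᵥ w) with hnw
  set nv := Real.sqrt (v ⬝ᵥ v) with hnv
  have hnwp : 0 < nw := Real.sqrt_pos.mpr hwp
  have hnvp : 0 < nv := Real.sqrt_pos.mpr hvp
  set a : Fin n → ℝ := nw⁻¹ • w with ha
  set b : Fin n → ℝ := nv⁻¹ • v with hb
  have hsq_w : nw ^ 2 = w ⬝ᵥ w := Real.sq_sqrt hwp.le
  have hsq_v : nv ^ 2 = v ⬝ᵥ v := Real.sq_sqrt hvp.le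
  have haa : a ⬝ᵥ a = 1 := by
    simp only [ha, smul_dotProduct, dotProduct_smul, smul_eq_mul]
    rw [← hsq_w]; field_simp [hnwp.ne']
    all_goals first | exact Or.inl trivial | ring
  have hbb : b ⬝ᵥ b = 1 := by
    simp only [hb, smul_dotProduct, dotProduct_smul, smul_eq_mul]
    rw [← hsq_v]; field_simp [hnvp.ne']
    all_goals first | exact Or.inl trivial | ring
  have hRw : (w ⬝ᵥ M.mulVec w) / (w ⬝ᵥ w) = a ⬝ᵥ M.mulVec a := by
    simp only [ha, smul_dotProduct, dotProduct_smul, Matrix.mulVec_smul, smul_eq_mul]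
    rw [← hsq_w, pow_two, div_eq_mul_inv, mul_inv]; ring
  have hRv : (v ⬝ᵥ M.mulVec v) / (v ⬝ᵥ v) = b ⬝ᵥ M.mulVec b := by
    simp only [hb, smul_dotProduct, dotProduct_smul, Matrix.mulVec_smul, smul_eq_mul]
    rw [← hsq_v, pow_two, div_eq_mul_inv, mul_inv]; ring
  have hab : a ⬝ᵥ b = (w ⬝ᵥ v) / (nw * nv) := by
    simp only [ha, hb, smul_dotProduct, dotProduct_smul, smul_eq_mul]
    rw [div_eq_mul_inv, mul_inv]; ring
  set θ := vecAngle w v with hθ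
  have habmem : a ⬝ᵥ b ∈ Set.Icc (-1 : ℝ) 1 := by
    have h1 : |a ⬝ᵥ b| ≤ Real.sqrt (a ⬝ᵥ a) * Real.sqrt (b ⬝ᵥ b) := abs_dot_le' a b
    rw [haa, hbb, Real.sqrt_one, mul_one] at h1
    exact abs_le.mp h1
  have hcos : Real.cos θ = a ⬝ᵥ b := by
    rw [hθ, vecAngle, ← hnw, ← hnv, ← hab]
    exact Real.cos_arccos habmem.1 habmem.2
  have hθ0 : 0 ≤ θ := Real.arccos_nonneg _
  have hdiff_dot : (a - b) ⬝ᵥ (a - b) = 2 - 2 * (a ⬝ᵥ b) := by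
    have hcomm : b ⬝ᵥ a = a ⬝ᵥ b := dotProduct_comm b a
    simp only [sub_dotProduct, dotProduct_sub]
    rw [haa, hbb, hcomm]; ring
  have hcosge : 1 - θ ^ 2 / 2 ≤ Real.cos θ := Real.one_sub_sq_div_two_le_cos
  have hnormab : Real.sqrt ((a - b) ⬝ᵥ (a - b)) ≤ θ := by
    have h1 : (a - b) ⬝ᵥ (a - b) ≤ θ ^ 2 := by
      rw [hdiff_dot, ← hcos]; nlinarith
    calc Real.sqrt ((a - b) ⬝ᵥ (a - b)) ≤ Real.sqrt (θ ^ 2) := Real.sqrt_le_sqrt h1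
      _ = θ := by rw [Real.sqrt_sq hθ0]
  have hid : b ⬝ᵥ M.mulVec b - a ⬝ᵥ M.mulVec a
      = (b - a) ⬝ᵥ M.mulVec b + a ⬝ᵥ M.mulVec (b - a) := by
    simp only [sub_dotProduct, Matrix.mulVec_sub, dotProduct_sub]; ring
  have hba : Real.sqrt ((b - a) ⬝ᵥ (b - a)) ≤ θ := by
    have : (b - a) ⬝ᵥ (b - a) = (a - b) ⬝ᵥ (a - b) := by
      simp only [sub_dotProduct, dotProduct_sub]; ring
    rw [this]; exact hnormab
  have h1 := abs_dot_mulVec_le' M (b - a) b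
  have h2 := abs_dot_mulVec_le' M a (b - a)
  rw [hbb] at h1; rw [haa] at h2
  simp only [Real.sqrt_one, mul_one, one_mul] at h1 h2
  have hMnn : 0 ≤ matOpNorm M := norm_nonneg _
  have hsnn : 0 ≤ Real.sqrt ((b - a) ⬝ᵥ (b - a)) := Real.sqrt_nonneg _
  rw [hRw, hRv]
  have e1 : |(b - a) ⬝ᵥ M.mulVec b| ≤ matOpNorm M * θ := by
    calc |(b - a) ⬝ᵥ M.mulVec b| ≤ matOpNorm M * Real.sqrt ((b - a) ⬝ᵥ (b - a)) := h1
      _ ≤ matOpNorm M * θ := mul_le_mul_of_nonneg_left hba hMnn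
  have e2 : |a ⬝ᵥ M.mulVec (b - a)| ≤ matOpNorm M * θ := by
    calc |a ⬝ᵥ M.mulVec (b - a)| ≤ matOpNorm M * Real.sqrt ((b - a) ⬝ᵥ (b - a)) := h2
      _ ≤ matOpNorm M * θ := mul_le_mul_of_nonneg_left hba hMnn
  have f1 := (abs_le.mp e1).2
  have f2 := (abs_le.mp e2).2
  linarith [hid, f1, f2]

end Aux

/-- Consistency of directional minimization over a grid direction subset `D^W ⊆ D`
with directional resolution `dθ < π/2`:
`λ_D(M) ≤ min_{v ∈ D^W} (vᵀMv)/|v|² ≤ λ_D(M) + 4 dθ ‖M‖`. -/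
theorem directional_consistency {n : ℕ} (D : Set (Fin n → ℝ))
    (hspan : Submodule.span ℝ D = ⊤)
    (hsymm : ∀ d ∈ D, -d ∈ D)
    (hzero : (0 : Fin n → ℝ) ∉ D)
    (DW : Finset (Fin n → ℝ)) (hDWne : DW.Nonempty) (hDWsub : ↑DW ⊆ D)
    (dθ : ℝ)
    (hdθ : dθ = sSup { r : ℝ | ∃ w ∈ D, r = DW.inf' hDWne (fun v => vecAngle w v) })
    (hdθlt : dθ < Real.pi / 2)
    (M : Matrix (Fin n) (Fin n) ℝ) (hM : M.IsSymm) :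
    lamD D M ≤ ((DW.inf' hDWne (fun v => (v ⬝ᵥ M.mulVec v) / (v ⬝ᵥ v)) : ℝ) : EReal) ∧
    ((DW.inf' hDWne (fun v => (v ⬝ᵥ M.mulVec v) / (v ⬝ᵥ v)) : ℝ) : EReal) ≤
      lamD D M + ((4 * dθ * matOpNorm M : ℝ) : EReal) := by
  set f : (Fin n → ℝ) → ℝ := fun v => (v ⬝ᵥ M.mulVec v) / (v ⬝ᵥ v) with hf
  obtain ⟨v0, hv0DW, hv0eq⟩ := Finset.exists_mem_eq_inf' hDWne f
  have hv0D : v0 ∈ D := hDWsub hv0DW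
  have hbdd : BddAbove { r : ℝ | ∃ w ∈ D, r = DW.inf' hDWne (fun v => vecAngle w v) } := by
    refine ⟨Real.pi, fun r hr => ?_⟩
    obtain ⟨w, hwD, hre⟩ := hr
    calc r = DW.inf' hDWne (fun v => vecAngle w v) := hre
      _ ≤ vecAngle w v0 := Finset.inf'_le _ hv0DW
      _ ≤ Real.pi := Real.arccos_le_pi _
  have hdθ0 : 0 ≤ dθ := by
    obtain ⟨u, huDW, hue⟩ := Finset.exists_mem_eq_inf' hDWne (fun v => vecAngle v0 v)
    have h1 : DW.inf' hDWne (fun v => vecAngle v0 v) ≤ dθ := by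
      rw [hdθ]; exact le_csSup hbdd ⟨v0, hv0D, rfl⟩
    have h2 : 0 ≤ DW.inf' hDWne (fun v => vecAngle v0 v) := by
      rw [hue]; exact Real.arccos_nonneg _
    linarith
  have hMnn : 0 ≤ matOpNorm M := norm_nonneg _
  constructor
  · rw [hv0eq]
    exact iInf₂_le v0 hv0D
  · have key : ∀ w ∈ D, DW.inf' hDWne f - 4 * dθ * matOpNorm M ≤ f w := by
      intro w hwD
      have hw0 : w ≠ 0 := fun h => hzero (h ▸ hwD)
      obtain ⟨u, huDW, hue⟩ := Finset.exists_mem_eq_inf' hDWne (fun v => vecAngle w v)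
      have hangle_le : vecAngle w u ≤ dθ := by
        rw [← hue, hdθ]
        exact le_csSup hbdd ⟨w, hwD, rfl⟩
      have hu0 : u ≠ 0 := fun h => hzero (h ▸ hDWsub huDW)
      have h1 : f u ≤ f w + 2 * vecAngle w u * matOpNorm M := rayleigh_diff' M hw0 hu0
      have h2 : DW.inf' hDWne f ≤ f u := Finset.inf'_le f huDW
      have h3 : vecAngle w u * matOpNorm M ≤ dθ * matOpNorm M :=
        mul_le_mul_of_nonneg_right hangle_le hMnn
      have h4 : 0 ≤ dθ * matOpNorm M := mul_nonneg hdθ0 hMnn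
      linarith
    have hle : ((DW.inf' hDWne f - 4 * dθ * matOpNorm M : ℝ) : EReal) ≤ lamD D M := by
      simp only [lamD]
      exact le_iInf₂ fun w hwD => EReal.coe_le_coe_iff.mpr (key w hwD)
    calc ((DW.inf' hDWne f : ℝ) : EReal)
        = ((DW.inf' hDWne f - 4 * dθ * matOpNorm M : ℝ) : EReal)
            + ((4 * dθ * matOpNorm M : ℝ) : EReal) := by
          rw [← EReal.coe_add]; norm_num
      _ ≤ lamD D M + ((4 * dθ * matOpNorm M : ℝ) : EReal) := add_le_add_left hle _
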